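/- For every commutative ring A, every family of weights R : ℤ → A, every integer a and all natural numbers j ≥ 1 and k ≥ 0: Π_{a,a+2j−1}(j) · Σ_{ℓ=1}^{k} (−1)^{k−ℓ} · Π_{a,a+2k−1}(k−ℓ) · Z⁺_{a,a+2j−1}(2ℓ−1) equals (−1)^{k−j} · Π_{a,a+2k−1}(k) if k ≥ j, and equals 0 if k < j. -/

import Mathlib

open Finset

variable {A : Type*} [CommRing A]

/-- End height of a walk starting at a given height, with steps given by a list of
Booleans (`true` = ascending step `+1`, `false` = descending step `-1`). -/
def walkEnd : ℤ → List Bool → ℤ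
  | a, [] => a
  | a, true :: s => walkEnd (a + 1) s
  | a, false :: s => walkEnd (a - 1) s

/-- Weight of a walk: the product of `R h` over all descending steps `h → h - 1`. -/
def walkWeight (R : ℤ → A) : ℤ → List Bool → A
  | _, [] => 1
  | a, true :: s => walkWeight R (a + 1) s
  | a, false :: s => R a * walkWeight R (a - 1) s

/-- Whether every height visited by the walk (including the first and last) is `≥ c`. -/
def walkAbove (c : ℤ) : ℤ → List Bool → Bool
  | a, [] => decide (c ≤ a)
  | a, true :: s => decide (c ≤ a) && walkAbove c (a + 1) s
  | a, false :: s => decide (c ≤ a) && walkAbove c (a - 1) s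

/-- `Zw R a b k`: the generating function of walks of length `k` from height `a` to
height `b`, each walk weighted by `R h` per descending step from height `h`. -/
def Zw (R : ℤ → A) (a b : ℤ) (k : ℕ) : A :=
  ∑ s : Fin k → Bool,
    if walkEnd a (List.ofFn s) = b then walkWeight R a (List.ofFn s) else 0

/-- `Zwp R a b k`: the same generating function, restricted to walks staying at
heights `≥ a` ("positive walks"). -/
def Zwp (R : ℤ → A) (a b : ℤ) (k : ℕ) : A :=
  ∑ s : Fin k → Bool,
    if walkEnd a (List.ofFn s) = b ∧ walkAbove a a (List.ofFn s) = true then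
      walkWeight R a (List.ofFn s)
    else 0

/-- `Pdim R a b k`: hard-dimer partition function on the segment `[a,b]`: the sum over
`k`-element subsets `S` of `{a+1, …, b}` with no two consecutive elements of
`∏ i in S, R i` (a dimer on `[i-1,i]` carries weight `R i`). -/
noncomputable def Pdim (R : ℤ → A) (a b : ℤ) (k : ℕ) : A :=
  ∑ S ∈ Finset.powersetCard k (Finset.Icc (a + 1) b),
    if ∀ i ∈ S, i + 1 ∉ S then ∏ i ∈ S, R i else 0

/-- `Vp R g m a b = Σ_{k=1}^{m} g_k • Zw R a b (2k-1)`: grand-canonical generating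
function for walks of odd length from `a` to `b`. -/
def Vp (R : ℤ → A) (g : ℕ → A) (m : ℕ) (a b : ℤ) : A :=
  ∑ k ∈ Finset.Icc 1 m, g k * Zw R a b (2 * k - 1)

/-- The conserved quantities `Γ_{2i}(n)`; `Gam R g m i n` stands for `Γ_{2i}(n)`. -/
def Gam (R : ℤ → A) (g : ℕ → A) (m : ℕ) (i : ℕ) (n : ℤ) : A :=
  if i = 0 then R (n - 1) - Vp R g m (n - 1) (n - 2) + (if n = 0 then 1 else 0)
  else
    Zwp R (n - 1) (n - 1) (2 * i) *
        (R (n - 1) - Vp R g m (n - 1) (n - 2) + (if n = 0 then 1 else 0)) -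
      ∑ j ∈ Finset.Icc 1 i,
        Zwp R (n - 1) (n - 1 + 2 * (j : ℤ)) (2 * i) * Vp R g m (n + 2 * (j : ℤ) - 1) (n - 2)

/-- The symmetric conserved quantities `Γ̃_{2i}(n)`; `Gamt R g m i n` stands
for `Γ̃_{2i}(n)`. -/
def Gamt (R : ℤ → A) (g : ℕ → A) (m : ℕ) (i : ℕ) (n : ℤ) : A :=
  if i = 0 then R n - Vp R g m n (n - 1)
  else
    (Zw R n (n - 1) (2 * i - 1) - R (n - 1) * R (n + 1) * Zw R (n - 2) (n + 1) (2 * i - 1)) *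
        (R n - Vp R g m n (n - 1)) -
      ∑ j ∈ Finset.Icc 1 i,
        (Zw R (n - (j : ℤ)) (n + (j : ℤ) - 1) (2 * i - 1) -
            R (n - (j : ℤ) - 1) * R (n + (j : ℤ) + 1) *
              Zw R (n - (j : ℤ) - 2) (n + (j : ℤ) + 1) (2 * i - 1)) *
          Vp R g m (n + (j : ℤ)) (n - (j : ℤ) - 1)

/-- The master equation: `R i = 0` for `i < 0` and `R n = 1 + V'_{n,n-1}` for `n ≥ 0`. -/
def MasterEq (R : ℤ → A) (g : ℕ → A) (m : ℕ) : Prop :=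
  (∀ i : ℤ, i < 0 → R i = 0) ∧ ∀ n : ℤ, 0 ≤ n → R n = 1 + Vp R g m n (n - 1)

/-- `Zodd R a b i = Zw R a b (2i-1)`, with the convention that for `i = 0`
(walks of length `-1`) it equals `1` if `b = a - 1` and `0` otherwise. -/
def Zodd (R : ℤ → A) (a b : ℤ) (i : ℕ) : A :=
  if i = 0 then (if b = a - 1 then 1 else 0) else Zw R a b (2 * i - 1)

/-- Binomial coefficient with an integer lower index, with the convention that it
vanishes for negative lower index. -/
def Cz (n : ℕ) (p : ℤ) : ℤ := if 0 ≤ p then n.choose p.toNat else 0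

section AuxStmt5

/-- Recursive version of `Zwp` (walks from `a` to `b` staying `≥ c`). -/
def Zr (R : ℤ → A) (c : ℤ) : ℕ → ℤ → ℤ → A
  | 0, a, b => if c ≤ a ∧ a = b then 1 else 0
  | n+1, a, b => if c ≤ a then Zr R c n (a+1) b + R a * Zr R c n (a-1) b else 0

/-- Recursive version of `Pdim`: `Pr R a n p = Pdim R a (a+n) p`. -/
def Pr (R : ℤ → A) (a : ℤ) : ℕ → ℕ → A
  | _, 0 => 1
  | 0, _+1 => 0
  | 1, p+1 => if p = 0 then R (a+1) else 0
  | n+2, p+1 => Pr R a (n+1) (p+1) + R (a+(n:ℤ)+2) * Pr R a n p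

lemma zr_low (R : ℤ → A) (c : ℤ) : ∀ (n : ℕ) (a b : ℤ), b < c → Zr R c n a b = 0 := by
  intro n
  induction n with
  | zero => intro a b h; simp only [Zr]; split
            · omega
            · rfl
  | succ n ih => intro a b h; simp only [Zr, ih _ _ h, mul_zero, add_zero]; split <;> rfl

lemma zr_high (R : ℤ → A) (c : ℤ) : ∀ (n : ℕ) (a b : ℤ), a + n < b → Zr R c n a b = 0 := by
  intro n
  induction n with
  | zero => intro a b h; simp only [Zr]; split
            · omega
            · rfl
  | succ n ih =>
      intro a b h
      have h1 : (a+1) + (n:ℤ) < b := by push_cast at h ⊢; omega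
      have h2 : (a-1) + (n:ℤ) < b := by push_cast at h ⊢; omega
      simp only [Zr, ih _ _ h1, ih _ _ h2, mul_zero, add_zero]; split <;> rfl


/-- Last-step recursion for `Zr`. -/
lemma zr_last (R : ℤ → A) (c : ℤ) : ∀ (n : ℕ) (a b : ℤ), c ≤ b →
    Zr R c (n+1) a b =
      (if c + 1 ≤ b then Zr R c n a (b-1) else 0) + R (b+1) * Zr R c n a (b+1) := by
  intro n
  induction n with
  | zero =>
      intro a b hcb
      simp only [Zr]
      split_ifs with h1 h2 h3 h4 h5 h6 h7 h8 h9 h10 h11 <;> (simp_all; try omega)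
  | succ n ih =>
      intro a b hcb
      show (if c ≤ a then Zr R c (n+1) (a+1) b + R a * Zr R c (n+1) (a-1) b else 0) = _
      by_cases hca : c ≤ a
      · rw [if_pos hca, ih (a+1) b hcb, ih (a-1) b hcb]
        show _ = (if c + 1 ≤ b then
            (if c ≤ a then Zr R c n (a+1) (b-1) + R a * Zr R c n (a-1) (b-1) else 0) else 0)
            + R (b+1) * (if c ≤ a then Zr R c n (a+1) (b+1) + R a * Zr R c n (a-1) (b+1) else 0)
        rw [if_pos hca, if_pos hca]
        by_cases hcb1 : c + 1 ≤ b <;> simp [hcb1] <;> ring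
      · rw [if_neg hca]
        show (0:A) = (if c + 1 ≤ b then (if c ≤ a then _ else 0) else 0)
            + R (b+1) * (if c ≤ a then _ else 0)
        rw [if_neg hca, if_neg hca]
        simp


lemma pr_zero (R : ℤ → A) (a : ℤ) (n : ℕ) : Pr R a n 0 = 1 := by
  match n with
  | 0 => rfl
  | 1 => rfl
  | n+2 => rfl

lemma pr_overfull (R : ℤ → A) (a : ℤ) : ∀ (n p : ℕ), n + 2 ≤ 2 * p → Pr R a n p = 0 := by
  intro n
  induction n using Nat.twoStepInduction with
  | zero =>
      intro p h
      match p, h with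
      | p+1, _ => rfl
  | one =>
      intro p h
      match p, h with
      | p+1, h =>
        show (if p = 0 then R (a+1) else 0) = 0
        have : p ≠ 0 := by omega
        simp [this]
  | more n ih1 ih2 =>
      intro p h
      match p, h with
      | p+1, h =>
        show Pr R a (n+1) (p+1) + R (a+(n:ℤ)+2) * Pr R a n p = 0
        rw [ih2 (p+1) (by omega), ih1 p (by omega)]
        ring

lemma pr_rec (R : ℤ → A) (a : ℤ) (n q : ℕ) :
    Pr R a (n+1) (q+1) = Pr R a n (q+1) + R (a+(n:ℤ)+1) * Pr R a (n-1) q := by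
  match n with
  | 0 =>
      show (if q = 0 then R (a+1) else 0) = 0 + R (a+0+1) * Pr R a 0 q
      match q with
      | 0 => simp [Pr]
      | q+1 => simp [Pr]
  | n+1 =>
      show Pr R a (n+1) (q+1) + R (a+(n:ℤ)+2) * Pr R a n q = _
      have : a + (n:ℤ) + 2 = a + ((n:ℕ)+1:ℕ) + 1 := by push_cast; ring
      rw [this]
      norm_num

lemma pr_full (R : ℤ → A) (a : ℤ) : ∀ j : ℕ, Pr R a (2*j-1) j = ∏ i ∈ range j, R (a+2*(i:ℤ)+1) := by
  intro j
  induction j with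
  | zero => simp [pr_zero]
  | succ j ih =>
      have h1 : 2*(j+1)-1 = (2*j)+1 := by omega
      rw [h1, pr_rec]
      have h2 : Pr R a (2*j) (j+1) = 0 := pr_overfull R a _ _ (by omega)
      have h3 : 2*j-1 = 2*j-1 := rfl
      rw [h2, prod_range_succ, ih]
      push_cast
      ring


lemma main_even (R : ℤ → A) (a : ℤ) : ∀ (n : ℕ) (b : ℤ),
    (∑ p ∈ range (n+1), (-1:A)^p * Pr R a (n-1) p * Zr R a (n - 2*p) a b)
      = if b = a + (n:ℤ) then 1 else 0 := by
  intro n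
  induction n using Nat.twoStepInduction with
  | zero =>
      intro b
      simp [Zr, pr_zero, eq_comm]
  | one =>
      intro b
      rw [sum_range_succ, sum_range_succ, sum_range_zero]
      show 0 + (-1:A)^0 * Pr R a 0 0 * Zr R a 1 a b + (-1:A)^1 * Pr R a 0 1 * Zr R a 0 a b = _
      have h1 : Pr R a 0 1 = 0 := rfl
      have h0 : Pr R a 0 0 = 1 := rfl
      have hz : Zr R a 1 a b = if b = a + 1 then 1 else 0 := by
        show (if a ≤ a then Zr R a 0 (a+1) b + R a * Zr R a 0 (a-1) b else 0) = _
        rw [if_pos le_rfl]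
        show (if a ≤ a+1 ∧ a+1 = b then (1:A) else 0) + R a * (if a ≤ a-1 ∧ a-1 = b then 1 else 0) = _
        rw [if_neg (by omega : ¬(a ≤ a-1 ∧ a-1 = b))]
        have hiff : (a ≤ a+1 ∧ a+1 = b) ↔ (b = a+1) := by omega
        simp only [hiff]
        ring
      rw [h1, h0, hz]
      push_cast
      ring
  | more n ih1 ih2 =>
      intro b
      show (∑ p ∈ range (n+3), (-1:A)^p * Pr R a (n+1) p * Zr R a (n+2 - 2*p) a b) = _
      by_cases hab : a ≤ b
      · have hsplit : ∀ p ∈ range (n+3),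
            (-1:A)^p * Pr R a (n+1) p * Zr R a (n+2 - 2*p) a b
            = (-1:A)^p * Pr R a n p * Zr R a (n+2 - 2*p) a b
              + (-1:A)^p * R (a+(n:ℤ)+1) *
                  (if p = 0 then 0 else Pr R a (n-1) (p-1)) * Zr R a (n+2 - 2*p) a b := by
          intro p _
          match p with
          | 0 => simp [pr_zero]
          | q+1 =>
              rw [pr_rec]
              have hq : q + 1 - 1 = q := rfl
              rw [hq, if_neg (Nat.succ_ne_zero q)]
              ring
        rw [Finset.sum_congr rfl hsplit, Finset.sum_add_distrib]
        have hS2 : (∑ p ∈ range (n+3), (-1:A)^p * R (a+(n:ℤ)+1) *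
              (if p = 0 then 0 else Pr R a (n-1) (p-1)) * Zr R a (n+2 - 2*p) a b)
            = - (R (a+(n:ℤ)+1) * (if b = a + (n:ℤ) then 1 else 0)) := by
          rw [sum_range_succ']
          have hzero : ((-1:A)^0 * R (a+(n:ℤ)+1) *
              (if 0 = 0 then 0 else Pr R a (n-1) (0-1)) * Zr R a (n+2 - 2*0) a b) = 0 := by
            rw [if_pos rfl]; ring
          rw [hzero, add_zero]
          have hterm : ∀ q ∈ range (n+2), (-1:A)^(q+1) * R (a+(n:ℤ)+1) *
              (if q+1 = 0 then 0 else Pr R a (n-1) (q+1-1)) * Zr R a (n+2 - 2*(q+1)) a b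
              = - (R (a+(n:ℤ)+1) * ((-1:A)^q * Pr R a (n-1) q * Zr R a (n - 2*q) a b)) := by
            intro q _
            have hnn : n+2 - 2*(q+1) = n - 2*q := by omega
            have hq : q + 1 - 1 = q := rfl
            rw [hq, if_neg (Nat.succ_ne_zero q), hnn]
            ring
          rw [Finset.sum_congr rfl hterm, Finset.sum_neg_distrib, ← Finset.mul_sum]
          have hextra : (∑ q ∈ range (n+2), (-1:A)^q * Pr R a (n-1) q * Zr R a (n - 2*q) a b)
              = (∑ q ∈ range (n+1), (-1:A)^q * Pr R a (n-1) q * Zr R a (n - 2*q) a b) := by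
            rw [sum_range_succ, pr_overfull R a (n-1) (n+1) (by omega)]
            ring
          rw [hextra, ih1 b]
        have hS1 : (∑ p ∈ range (n+3), (-1:A)^p * Pr R a n p * Zr R a (n+2 - 2*p) a b)
            = (if a + 1 ≤ b then (if b - 1 = a + ((n:ℤ)+1) then 1 else 0) else 0)
              + R (b+1) * (if b + 1 = a + ((n:ℤ)+1) then 1 else 0) := by
          rw [sum_range_succ, pr_overfull R a n (n+2) (by omega)]
          have htrail : (-1:A)^(n+2) * 0 * Zr R a (n+2-2*(n+2)) a b = 0 := by ring
          rw [htrail, add_zero]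
          have hterm : ∀ p ∈ range (n+2),
              (-1:A)^p * Pr R a n p * Zr R a (n+2 - 2*p) a b
              = (if a + 1 ≤ b then (-1:A)^p * Pr R a n p * Zr R a (n+1 - 2*p) a (b-1) else 0)
                + R (b+1) * ((-1:A)^p * Pr R a n p * Zr R a (n+1 - 2*p) a (b+1)) := by
            intro p _
            by_cases h2p : 2*p ≤ n+1
            · have hm : n+2 - 2*p = (n+1-2*p) + 1 := by omega
              rw [hm, zr_last R a _ a b hab]
              split_ifs <;> ring
            · rw [pr_overfull R a n p (by omega)]
              split_ifs <;> ring
          rw [Finset.sum_congr rfl hterm, Finset.sum_add_distrib, ← Finset.mul_sum]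
          have e2 : (∑ p ∈ range (n+2), (-1:A)^p * Pr R a n p * Zr R a (n+1 - 2*p) a (b+1))
              = if b + 1 = a + ((n:ℤ)+1) then 1 else 0 := by
            have h := ih2 (b+1)
            simp only [Nat.add_sub_cancel] at h
            push_cast at h
            exact h
          by_cases hb1 : a + 1 ≤ b
          · simp only [if_pos hb1]
            have e1 : (∑ p ∈ range (n+2), (-1:A)^p * Pr R a n p * Zr R a (n+1 - 2*p) a (b-1))
                = if b - 1 = a + ((n:ℤ)+1) then 1 else 0 := by
              have h := ih2 (b-1)
              simp only [Nat.add_sub_cancel] at h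
              push_cast at h
              exact h
            rw [e1, e2]
          · simp only [if_neg hb1, Finset.sum_const_zero]
            rw [e2]
        rw [hS1, hS2]
        have hcast : ((n+2 : ℕ) : ℤ) = (n:ℤ) + 2 := by push_cast; ring
        rw [hcast]
        rcases (by omega : b = a + (n:ℤ) + 2 ∨ b = a + (n:ℤ) ∨ (b ≠ a + (n:ℤ) + 2 ∧ b ≠ a + (n:ℤ))) with h | h | ⟨g3, g4⟩
        · rw [h]
          rw [if_pos (by omega : a + 1 ≤ a + (n:ℤ) + 2),
              if_pos (by omega : a + (n:ℤ) + 2 - 1 = a + ((n:ℤ)+1)),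
              if_neg (by omega : ¬(a + (n:ℤ) + 2 + 1 = a + ((n:ℤ)+1))),
              if_neg (by omega : ¬(a + (n:ℤ) + 2 = a + (n:ℤ))),
              if_pos (by omega : a + (n:ℤ) + 2 = a + ((n:ℤ) + 2))]
          ring
        · rw [h]
          rw [if_neg (by omega : ¬(a + (n:ℤ) - 1 = a + ((n:ℤ)+1))),
              if_pos (by omega : a + (n:ℤ) + 1 = a + ((n:ℤ)+1)),
              if_pos rfl,
              if_neg (by omega : ¬(a + (n:ℤ) = a + ((n:ℤ) + 2))),
              ite_self]
          ring
        · rw [if_neg (by omega : ¬(b - 1 = a + ((n:ℤ)+1))),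
              if_neg (by omega : ¬(b + 1 = a + ((n:ℤ)+1))),
              if_neg g4, if_neg (by omega : ¬(b = a + ((n:ℤ) + 2))), ite_self]
          ring
      · rw [Finset.sum_eq_zero, if_neg (by push_cast; omega)]
        intro p _
        rw [zr_low R a _ a b (by omega)]
        ring


lemma sum_walks (R : ℤ → A) : ∀ (n : ℕ) (c a b : ℤ),
    (∑ s : Fin n → Bool,
      if walkEnd a (List.ofFn s) = b ∧ walkAbove c a (List.ofFn s) = true then
        walkWeight R a (List.ofFn s) else 0) = Zr R c n a b := by
  intro n
  induction n with
  | zero =>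
      intro c a b
      simp [Zr, walkEnd, walkAbove, walkWeight, and_comm, eq_comm]
  | succ n ih =>
      intro c a b
      have hequiv : (∑ s : Fin (n+1) → Bool,
          if walkEnd a (List.ofFn s) = b ∧ walkAbove c a (List.ofFn s) = true then
            walkWeight R a (List.ofFn s) else 0)
          = ∑ x : Bool × (Fin n → Bool),
              if walkEnd a (List.ofFn (Fin.cons x.1 x.2)) = b ∧
                  walkAbove c a (List.ofFn (Fin.cons x.1 x.2)) = true then
                walkWeight R a (List.ofFn (Fin.cons x.1 x.2)) else 0 := by
        apply Fintype.sum_equiv (Fin.consEquiv (fun _ : Fin (n+1) => Bool)).symm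
        intro s
        simp only [Fin.consEquiv_symm_apply]
        rw [Fin.cons_self_tail]
      rw [hequiv, Fintype.sum_prod_type, Fintype.sum_bool]
      have hofn : ∀ (x : Bool) (s : Fin n → Bool),
          List.ofFn (Fin.cons x s) = x :: List.ofFn s := by
        intro x s
        rw [List.ofFn_succ]
        simp [Fin.cons_zero, Fin.cons_succ]
      show (∑ s : Fin n → Bool, _) + (∑ s : Fin n → Bool, _) = _
      by_cases hca : c ≤ a
      · have htrue : (∑ s : Fin n → Bool,
            if walkEnd a (List.ofFn (Fin.cons true s)) = b ∧
                walkAbove c a (List.ofFn (Fin.cons true s)) = true then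
              walkWeight R a (List.ofFn (Fin.cons true s)) else 0) = Zr R c n (a+1) b := by
          rw [← ih c (a+1) b]
          apply Fintype.sum_congr
          intro s
          rw [hofn]
          simp [walkEnd, walkAbove, walkWeight, hca]
        have hfalse : (∑ s : Fin n → Bool,
            if walkEnd a (List.ofFn (Fin.cons false s)) = b ∧
                walkAbove c a (List.ofFn (Fin.cons false s)) = true then
              walkWeight R a (List.ofFn (Fin.cons false s)) else 0) = R a * Zr R c n (a-1) b := by
          rw [← ih c (a-1) b, Finset.mul_sum]
          apply Fintype.sum_congr
          intro s
          rw [hofn]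
          simp only [walkEnd, walkAbove, walkWeight, hca, mul_ite, mul_zero]
          split_ifs with h1 h2 h3
          · rfl
          · simp_all
          · simp_all
          · rfl
        rw [htrue, hfalse]
        show _ = if c ≤ a then Zr R c n (a+1) b + R a * Zr R c n (a-1) b else 0
        rw [if_pos hca]
      · show _ = if c ≤ a then Zr R c n (a+1) b + R a * Zr R c n (a-1) b else 0
        rw [if_neg hca]
        have hzero : ∀ (x : Bool), (∑ s : Fin n → Bool,
            if walkEnd a (List.ofFn (Fin.cons x s)) = b ∧
                walkAbove c a (List.ofFn (Fin.cons x s)) = true then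
              walkWeight R a (List.ofFn (Fin.cons x s)) else 0) = 0 := by
          intro x
          apply Finset.sum_eq_zero
          intro s _
          rw [hofn]
          cases x <;> simp [walkAbove, hca]
        rw [hzero true, hzero false, add_zero]

lemma zwp_eq (R : ℤ → A) (a b : ℤ) (k : ℕ) : Zwp R a b k = Zr R a k a b :=
  sum_walks R k a a b


lemma pdim_zero (R : ℤ → A) (a b : ℤ) : Pdim R a b 0 = 1 := by
  simp [Pdim]

lemma pdim_empty (R : ℤ → A) (a b : ℤ) (h : b ≤ a) (p : ℕ) :
    Pdim R a b (p+1) = 0 := by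
  unfold Pdim
  rw [Finset.Icc_eq_empty (by omega)]
  rw [show Finset.powersetCard (p+1) (∅:Finset ℤ) = ∅ from rfl, Finset.sum_empty]

lemma pdim_rec (R : ℤ → A) (a b : ℤ) (h : a ≤ b) (p : ℕ) :
    Pdim R a (b+1) (p+1) = Pdim R a b (p+1) + R (b+1) * Pdim R a (b-1) p := by
  unfold Pdim
  have hins : Finset.Icc (a+1) (b+1) = insert (b+1) (Finset.Icc (a+1) b) := by
    ext x; simp [Finset.mem_Icc, Finset.mem_insert]; omega
  have hnotmem : (b+1) ∉ Finset.Icc (a+1) b := by simp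
  rw [hins, Finset.powersetCard_succ_insert hnotmem, Finset.sum_union]
  · congr 1
    -- second summand : sum over image
    rw [Finset.sum_image (by
      intro S hS T hT hST
      have hbS : (b+1) ∉ S := fun hx => hnotmem ((Finset.mem_powersetCard.1 hS).1 hx)
      have hbT : (b+1) ∉ T := fun hx => hnotmem ((Finset.mem_powersetCard.1 hT).1 hx)
      ext x
      constructor
      · intro hx
        have : x ∈ insert (b+1) T := by rw [← hST]; exact Finset.mem_insert_of_mem hx
        rcases Finset.mem_insert.1 this with rfl | h
        · exact absurd hx hbS
        · exact h
      · intro hx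
        have : x ∈ insert (b+1) S := by rw [hST]; exact Finset.mem_insert_of_mem hx
        rcases Finset.mem_insert.1 this with rfl | h
        · exact absurd hx hbT
        · exact h)]
    -- now a sum over powersetCard p (Icc (a+1) b)
    have hcond : ∀ S ∈ Finset.powersetCard p (Finset.Icc (a+1) b),
        (if ∀ i ∈ insert (b+1) S, i + 1 ∉ insert (b+1) S then ∏ i ∈ insert (b+1) S, R i else 0)
        = if b ∉ S ∧ ∀ i ∈ S, i + 1 ∉ S then R (b+1) * ∏ i ∈ S, R i else 0 := by
      intro S hS
      have hSsub := (Finset.mem_powersetCard.1 hS).1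
      have hbS : (b+1) ∉ S := fun hx => hnotmem (hSsub hx)
      have hiff : (∀ i ∈ insert (b+1) S, i + 1 ∉ insert (b+1) S)
          ↔ (b ∉ S ∧ ∀ i ∈ S, i + 1 ∉ S) := by
        constructor
        · intro hcnd
          constructor
          · intro hb
            exact hcnd b (Finset.mem_insert_of_mem hb) (Finset.mem_insert_self _ _)
          · intro i hi hi1
            exact hcnd i (Finset.mem_insert_of_mem hi) (Finset.mem_insert_of_mem hi1)
        · rintro ⟨hb, hcnd⟩ i hi hi1
          rcases Finset.mem_insert.1 hi with rfl | hi'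
          · rcases Finset.mem_insert.1 hi1 with he | hi1'
            · omega
            · have := Finset.mem_Icc.1 (hSsub hi1'); omega
          · rcases Finset.mem_insert.1 hi1 with he | hi1'
            · have hib : i = b := by omega
              exact absurd (hib ▸ hi') hb
            · exact hcnd i hi' hi1'
      rw [if_congr hiff (Finset.prod_insert hbS) rfl]
    rw [Finset.sum_congr rfl hcond]
    -- restrict to subsets of Icc (a+1) (b-1)
    rw [← Finset.sum_subset (Finset.powersetCard_mono (Finset.Icc_subset_Icc_right (by omega : b-1 ≤ b)) )]
    · rw [Finset.mul_sum]
      apply Finset.sum_congr rfl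
      intro S hS
      have hSsub := (Finset.mem_powersetCard.1 hS).1
      have hbS : b ∉ S := by
        intro hb
        have := Finset.mem_Icc.1 (hSsub hb); omega
      have hcnd2 : (b ∉ S ∧ ∀ i ∈ S, i+1 ∉ S) ↔ (∀ i ∈ S, i+1 ∉ S) :=
        ⟨fun h => h.2, fun h => ⟨hbS, h⟩⟩
      rw [if_congr hcnd2 rfl rfl, mul_ite, mul_zero]
    · intro S hS hS'
      have hSsub := (Finset.mem_powersetCard.1 hS).1
      have hbS : b ∈ S := by
        by_contra hb
        apply hS'
        rw [Finset.mem_powersetCard]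
        refine ⟨?_, (Finset.mem_powersetCard.1 hS).2⟩
        intro x hx
        have := Finset.mem_Icc.1 (hSsub hx)
        have : x ≠ b := fun h => hb (h ▸ hx)
        rw [Finset.mem_Icc]
        omega
      exact if_neg (fun h => h.1 hbS)
  · -- disjointness
    rw [Finset.disjoint_left]
    intro S hS hS'
    have hbS : (b+1) ∉ S := fun hx => hnotmem ((Finset.mem_powersetCard.1 hS).1 hx)
    rcases Finset.mem_image.1 hS' with ⟨T, hT, rfl⟩
    exact hbS (Finset.mem_insert_self _ _)

lemma pdim_eq (R : ℤ → A) (a : ℤ) : ∀ (n p : ℕ), Pdim R a (a + (n:ℤ)) p = Pr R a n p := by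
  intro n
  induction n using Nat.twoStepInduction with
  | zero =>
      intro p
      match p with
      | 0 => rw [pdim_zero, pr_zero]
      | p+1 =>
          rw [show a + ((0:ℕ):ℤ) = a by simp, pdim_empty R a a le_rfl]
          rfl
  | one =>
      intro p
      match p with
      | 0 => rw [pdim_zero, pr_zero]
      | p+1 =>
          rw [show a + ((1:ℕ):ℤ) = a + 1 by simp, pdim_rec R a a le_rfl p,
            pdim_empty R a a le_rfl p]
          match p with
          | 0 =>
              rw [pdim_zero]
              show 0 + R (a+1) * 1 = if (0:ℕ) = 0 then R (a+1) else 0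
              simp
          | q+1 =>
              rw [pdim_empty R a (a-1) (by omega) q]
              show 0 + R (a+1) * 0 = if q+1 = 0 then R (a+1) else 0
              simp
  | more n ih1 ih2 =>
      intro p
      match p with
      | 0 => rw [pdim_zero, pr_zero]
      | p+1 =>
          rw [show a + ((n+2:ℕ):ℤ) = (a + ((n+1:ℕ):ℤ)) + 1 by push_cast; ring,
            pdim_rec R a _ (by push_cast; omega) p,
            show (a + ((n+1:ℕ):ℤ)) - 1 = a + ((n:ℕ):ℤ) by push_cast; ring,
            ih2 (p+1), ih1 p,
            show (a + ((n+1:ℕ):ℤ)) + 1 = a + (n:ℤ) + 2 by push_cast; ring]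
          rfl


end AuxStmt5

/-- the pair generating function identity. -/
theorem stmt_5 {A : Type*} [CommRing A] (R : ℤ → A) (a : ℤ) (j k : ℕ) (hj : 1 ≤ j) :
    Pdim R a (a + 2 * (j : ℤ) - 1) j *
        ∑ l ∈ Finset.Icc 1 k,
          (-1 : A) ^ (k - l) * Pdim R a (a + 2 * (k : ℤ) - 1) (k - l) *
            Zwp R a (a + 2 * (j : ℤ) - 1) (2 * l - 1) =
      if j ≤ k then (-1 : A) ^ (k - j) * Pdim R a (a + 2 * (k : ℤ) - 1) k else 0 := by
  rcases Nat.eq_zero_or_pos k with hk | hk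
  · subst hk
    rw [show Finset.Icc 1 0 = (∅ : Finset ℕ) from rfl, Finset.sum_empty, mul_zero,
      if_neg (by omega)]
  -- k ≥ 1 from here on
  have hcastk : a + 2 * (k : ℤ) - 1 = a + ((2*k-1 : ℕ) : ℤ) := by omega
  have hcastj : a + 2 * (j : ℤ) - 1 = a + ((2*j-1 : ℕ) : ℤ) := by omega
  -- the odd-length sums
  set W : ℕ → A := fun j' => ∑ l ∈ Finset.Icc 1 k,
    (-1:A)^(k-l) * Pr R a (2*k-1) (k-l) * Zr R a (2*l-1) a (a + 2*(j':ℤ) - 1) with hWdef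
  -- rewrite the goal in terms of Pr, Zr, W
  have hgoal : Pdim R a (a + 2 * (j : ℤ) - 1) j *
        ∑ l ∈ Finset.Icc 1 k,
          (-1 : A) ^ (k - l) * Pdim R a (a + 2 * (k : ℤ) - 1) (k - l) *
            Zwp R a (a + 2 * (j : ℤ) - 1) (2 * l - 1)
      = Pr R a (2*j-1) j * W j := by
    rw [hWdef]
    congr 1
    · rw [hcastj, pdim_eq]
    · apply Finset.sum_congr rfl
      intro l _
      rw [hcastk, pdim_eq, zwp_eq]
  rw [hgoal]
  -- W vanishes above the band
  have Whigh : ∀ j', k < j' → W j' = 0 := by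
    intro j' hj'
    rw [hWdef]
    apply Finset.sum_eq_zero
    intro l hl
    have hl' := Finset.mem_Icc.1 hl
    rw [zr_high R a (2*l-1) a _ (by omega)]
    ring
  -- the three-term relation from the main identity
  have Wrel : ∀ j' : ℕ, 1 ≤ j' →
      W j' + R (a + 2*(j':ℤ) + 1) * W (j'+1) = if j' = k then 1 else 0 := by
    intro j' hj'
    have hmain := main_even R a (2*k) (a + 2*(j':ℤ))
    -- truncate the sum to range (k+1)
    rw [← Finset.sum_subset (Finset.range_subset_range.2 (by omega : k+1 ≤ 2*k+1))
        (by intro p _ hp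
            rw [Finset.mem_range, not_lt] at hp
            rw [pr_overfull R a (2*k-1) p (by omega)]
            ring)] at hmain
    -- reflect the sum
    rw [← Finset.sum_range_reflect] at hmain
    simp only [Nat.add_sub_cancel] at hmain
    -- peel off the term ℓ = 0
    rw [Finset.sum_range_succ'] at hmain
    have hzero0 : (-1:A)^(k-0) * Pr R a (2*k-1) (k-0) * Zr R a (2*k - 2*(k-0)) a (a + 2*(j':ℤ))
        = 0 := by
      rw [show 2*k - 2*(k-0) = 0 from by omega]
      show (-1:A)^(k-0) * Pr R a (2*k-1) (k-0) *
        (if a ≤ a ∧ a = a + 2*(j':ℤ) then 1 else 0) = 0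
      rw [if_neg (by omega)]
      ring
    rw [hzero0, add_zero] at hmain
    -- split each walk according to its last step
    have hsplit : ∀ ℓ ∈ Finset.range k,
        (-1:A)^(k-(ℓ+1)) * Pr R a (2*k-1) (k-(ℓ+1)) * Zr R a (2*k - 2*(k-(ℓ+1))) a (a + 2*(j':ℤ))
        = (-1:A)^(k-(ℓ+1)) * Pr R a (2*k-1) (k-(ℓ+1)) * Zr R a (2*ℓ+1) a (a + 2*(j':ℤ) - 1)
          + R (a + 2*(j':ℤ) + 1) *
            ((-1:A)^(k-(ℓ+1)) * Pr R a (2*k-1) (k-(ℓ+1)) * Zr R a (2*ℓ+1) a (a + 2*(j':ℤ) + 1)) := by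
      intro ℓ hℓ
      have hlk := Finset.mem_range.1 hℓ
      rw [show 2*k - 2*(k-(ℓ+1)) = (2*ℓ+1) + 1 from by omega,
        zr_last R a (2*ℓ+1) a (a + 2*(j':ℤ)) (by omega),
        if_pos (by omega : a + 1 ≤ a + 2*(j':ℤ))]
      ring
    rw [Finset.sum_congr rfl hsplit, Finset.sum_add_distrib, ← Finset.mul_sum] at hmain
    -- identify the two sums with W j' and W (j'+1)
    have hWform : ∀ b : ℤ, (∑ l ∈ Finset.Icc 1 k,
        (-1:A)^(k-l) * Pr R a (2*k-1) (k-l) * Zr R a (2*l-1) a b)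
        = ∑ ℓ ∈ Finset.range k,
            (-1:A)^(k-(ℓ+1)) * Pr R a (2*k-1) (k-(ℓ+1)) * Zr R a (2*ℓ+1) a b := by
      intro b
      rw [show Finset.Icc 1 k = Finset.Ico 1 (k+1) from (Finset.Ico_add_one_right_eq_Icc ..).symm,
        Finset.sum_Ico_eq_sum_range]
      simp only [Nat.add_sub_cancel]
      apply Finset.sum_congr rfl
      intro i _
      rw [show 2*(1+i)-1 = 2*i+1 from by omega, show k-(1+i) = k-(i+1) from by omega]
    have hW1 : W j' = ∑ ℓ ∈ Finset.range k,
        (-1:A)^(k-(ℓ+1)) * Pr R a (2*k-1) (k-(ℓ+1)) * Zr R a (2*ℓ+1) a (a + 2*(j':ℤ) - 1) := by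
      rw [hWdef]; exact hWform _
    have hW2 : W (j'+1) = ∑ ℓ ∈ Finset.range k,
        (-1:A)^(k-(ℓ+1)) * Pr R a (2*k-1) (k-(ℓ+1)) * Zr R a (2*ℓ+1) a (a + 2*(j':ℤ) + 1) := by
      rw [hWdef]
      show (∑ l ∈ Finset.Icc 1 k,
        (-1:A)^(k-l) * Pr R a (2*k-1) (k-l) * Zr R a (2*l-1) a (a + 2*((j'+1:ℕ):ℤ) - 1)) = _
      rw [show a + 2*((j'+1:ℕ):ℤ) - 1 = a + 2*(j':ℤ) + 1 from by push_cast; ring]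
      exact hWform _
    rw [← hW1, ← hW2] at hmain
    rw [hmain]
    by_cases hjk : j' = k
    · rw [if_pos hjk, if_pos (by omega)]
    · rw [if_neg (by omega), if_neg hjk]
  -- closed form for W by downward induction
  have Wval : ∀ t : ℕ, ∀ j' : ℕ, 1 ≤ j' → j' + t = k →
      W j' = (-1:A)^t * ∏ i ∈ Finset.Ico j' k, R (a + 2*(i:ℤ) + 1) := by
    intro t
    induction t with
    | zero =>
        intro j' hj1 hjk
        have hjk' : j' = k := by omega
        subst hjk'
        have := Wrel j' hj1
        rw [Whigh (j'+1) (by omega), mul_zero, add_zero, if_pos rfl] at this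
        rw [this, Finset.Ico_self, Finset.prod_empty]
        ring
    | succ t ih =>
        intro j' hj1 hjk
        have := Wrel j' hj1
        rw [if_neg (by omega), ih (j'+1) (by omega) (by omega)] at this
        have hW : W j' = - (R (a + 2*(j':ℤ) + 1) *
            ((-1:A)^t * ∏ i ∈ Finset.Ico (j'+1) k, R (a + 2*(i:ℤ) + 1))) := by
          linear_combination this
        rw [hW, Finset.prod_eq_prod_Ico_succ_bot (by omega : j' < k)
          (fun i => R (a + 2*(i:ℤ) + 1))]
        ring
  -- conclude
  by_cases hjle : j ≤ k
  · rw [if_pos hjle, Wval (k-j) j hj (by omega), pr_full, hcastk, pdim_eq, pr_full]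
    rw [Finset.range_eq_Ico, Finset.range_eq_Ico,
      ← Finset.prod_Ico_consecutive (fun i => R (a + 2*(i:ℤ) + 1)) (Nat.zero_le j) hjle]
    ring
  · rw [if_neg hjle, Whigh j (by omega), mul_zero]
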